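/- Let d ≥ 1, M ≥ 1 be integers, U > 0, φ ∈ (0,1), and λ, β ≥ 0 with (1−φ)/(2d) < max(λ,β) < (1−φ)/(2d(1−φ^M)). Then there exists ε̄ > 0 such that for every ε with 0 < ε ≤ ε̄ and every 0 ≤ l ≤ M: u_l(ε) > 0; u_l(ε) < u_{l−1}(ε) for 1 ≤ l ≤ M (u is decreasing in l); and for each fixed l the function ε ↦ u_l(ε) is decreasing on (0, ε̄]. -/

import Mathlib

open Finset Set Filter

/-- Auxiliary: `(Faux phi U A ε l) = (w_l, Σ_{j≤l} w_j, D_l, Σ_{j≤l} D_j)` where `w` solves the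
recursion at parameter `ε` (extended to all real `ε`) and `D` is its `ε`-derivative. -/
noncomputable def Faux (phi U A : ℝ) (ε : ℝ) : ℕ → ℝ × ℝ × ℝ × ℝ
  | 0 => (U, U, 0, 0)
  | l + 1 =>
      let p := Faux phi U A ε l
      let c : ℝ := (l : ℝ) + 1
      let wn := (1 / (phi * c)) * (-ε * p.2.1 - A * c + c * p.1)
      let dn := (1 / (phi * c)) * (-p.2.1 - ε * p.2.2.2 + c * p.2.2.1)
      (wn, p.2.1 + wn, dn, p.2.2.2 + dn)

lemma Faux_sum (phi U A ε : ℝ) :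
    ∀ l, (Faux phi U A ε l).2.1 = ∑ j ∈ Finset.range (l + 1), (Faux phi U A ε j).1 := by
  intro l
  induction l with
  | zero => simp [Faux]
  | succ n ih =>
      rw [Finset.sum_range_succ, ← ih]
      simp [Faux]

lemma Faux_cont (phi U A : ℝ) (l : ℕ) : Continuous fun ε => Faux phi U A ε l := by
  induction l with
  | zero =>
      simp only [Faux]
      exact continuous_const
  | succ n ih =>
      have h1 : Continuous fun ε => (Faux phi U A ε n).1 := continuous_fst.comp ih
      have h2 : Continuous fun ε => (Faux phi U A ε n).2.1 :=
        (continuous_fst.comp continuous_snd).comp ih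
      have h3 : Continuous fun ε => (Faux phi U A ε n).2.2.1 :=
        (continuous_fst.comp (continuous_snd.comp continuous_snd)).comp ih
      have h4 : Continuous fun ε => (Faux phi U A ε n).2.2.2 :=
        (continuous_snd.comp (continuous_snd.comp continuous_snd)).comp ih
      simp only [Faux]
      fun_prop

lemma Faux_hasDerivAt (phi U A : ℝ) (ε : ℝ) (l : ℕ) :
    HasDerivAt (fun x => (Faux phi U A x l).1) ((Faux phi U A ε l).2.2.1) ε ∧
    HasDerivAt (fun x => (Faux phi U A x l).2.1) ((Faux phi U A ε l).2.2.2) ε := by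
  induction l with
  | zero =>
      constructor <;> simpa [Faux] using hasDerivAt_const ε _
  | succ n ih =>
      obtain ⟨ih1, ih2⟩ := ih
      have hmul : HasDerivAt (fun x => -x * (Faux phi U A x n).2.1)
          (-(Faux phi U A ε n).2.1 - ε * (Faux phi U A ε n).2.2.2) ε := by
        have h := ((hasDerivAt_id ε).mul ih2).neg
        simp only [id_eq, one_mul] at h
        have heq : (fun x => -(x * (Faux phi U A x n).2.1))
            = fun x => -x * (Faux phi U A x n).2.1 := by funext x; ring
        change HasDerivAt (fun x => -(x * (Faux phi U A x n).2.1)) _ ε at h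
        rw [heq] at h
        convert h using 1
        ring
      have hwn : HasDerivAt
          (fun x => (1 / (phi * ((n : ℝ) + 1))) *
            (-x * (Faux phi U A x n).2.1 - A * ((n : ℝ) + 1)
              + ((n : ℝ) + 1) * (Faux phi U A x n).1))
          ((1 / (phi * ((n : ℝ) + 1))) *
            (-(Faux phi U A ε n).2.1 - ε * (Faux phi U A ε n).2.2.2
              + ((n : ℝ) + 1) * (Faux phi U A ε n).2.2.1)) ε := by
        exact (((hmul.sub_const (A * ((n : ℝ) + 1))).add
            (ih1.const_mul ((n : ℝ) + 1))).const_mul (1 / (phi * ((n : ℝ) + 1))))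
      constructor
      · simpa only [Faux] using hwn
      · simpa only [Faux, Pi.add_def] using ih2.add hwn

lemma Faux_val0 (phi U A : ℝ) (hphi0 : phi ≠ 0) (hphi1 : (1:ℝ) - phi ≠ 0) (l : ℕ) :
    (Faux phi U A 0 l).1 = A / (1 - phi) + (U - A / (1 - phi)) / phi ^ l := by
  induction l with
  | zero =>
      show U = A / (1 - phi) + (U - A / (1 - phi)) / phi ^ 0
      field_simp
      ring
  | succ n ih =>
      have hc : ((n : ℝ) + 1) ≠ 0 := by positivity
      simp only [Faux, ih]
      field_simp
      ring

theorem u_sequence_positive_decreasing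
    (d M : ℕ) (hd : 1 ≤ d) (hM : 1 ≤ M)
    (U : ℝ) (hU : 0 < U)
    (phi : ℝ) (hphi : phi ∈ Set.Ioo (0 : ℝ) 1)
    (lam bet : ℝ) (hlam : 0 ≤ lam) (hbet : 0 ≤ bet)
    (hlow : (1 - phi) / (2 * (d : ℝ)) < max lam bet)
    (hhigh : max lam bet < (1 - phi) / (2 * (d : ℝ) * (1 - phi ^ M)))
    (u : ℝ → ℕ → ℝ)
    (hu0 : ∀ ε : ℝ, 0 < ε → u ε 0 = U)
    (hurec : ∀ ε : ℝ, 0 < ε → ∀ l : ℕ, 1 ≤ l → l ≤ M →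
      u ε l = (1 / (phi * (l : ℝ))) *
        (-ε * (∑ j ∈ Finset.range l, u ε j)
          - U * max lam bet * (2 * (d : ℝ)) * (l : ℝ) + (l : ℝ) * u ε (l - 1))) :
    ∃ εb : ℝ, 0 < εb ∧
      (∀ ε : ℝ, 0 < ε → ε ≤ εb → ∀ l ≤ M, 0 < u ε l) ∧
      (∀ ε : ℝ, 0 < ε → ε ≤ εb → ∀ l : ℕ, 1 ≤ l → l ≤ M → u ε l < u ε (l - 1)) ∧
      (∀ l ≤ M, AntitoneOn (fun ε => u ε l) (Set.Ioc 0 εb)) := by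
  obtain ⟨hphi0, hphi1⟩ := hphi
  set cm : ℝ := max lam bet with hcm
  set A : ℝ := U * cm * (2 * (d : ℝ)) with hA
  set w : ℝ → ℕ → ℝ := fun ε l => (Faux phi U A ε l).1 with hw
  set D : ℝ → ℕ → ℝ := fun ε l => (Faux phi U A ε l).2.2.1 with hDdef
  have hd0 : (0:ℝ) < 2 * (d : ℝ) := by
    have : (1:ℝ) ≤ (d:ℝ) := by exact_mod_cast hd
    linarith
  have h1phi : (0:ℝ) < 1 - phi := by linarith
  -- u agrees with w for positive ε
  have huw : ∀ l, l ≤ M → ∀ ε : ℝ, 0 < ε → u ε l = w ε l := by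
    intro l
    induction l using Nat.strong_induction_on with
    | _ l ih =>
      intro hlM ε hε
      match l with
      | 0 => simp [hw, Faux, hu0 ε hε]
      | n + 1 =>
        have hrec := hurec ε hε (n+1) (Nat.succ_le_succ (Nat.zero_le n)) hlM
        have hsum : ∑ j ∈ Finset.range (n + 1), u ε j
            = ∑ j ∈ Finset.range (n + 1), w ε j := by
          refine Finset.sum_congr rfl fun j hj => ?_
          exact ih j (Finset.mem_range.mp hj)
            (le_trans (Nat.le_of_lt_succ (Finset.mem_range.mp hj)) (Nat.le_of_succ_le hlM)) ε hε
        have hn : u ε n = w ε n := ih n (Nat.lt_succ_self n) (Nat.le_of_succ_le hlM) ε hε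
        rw [hrec, hsum]
        simp only [Nat.add_sub_cancel, hn, hw]
        rw [← Faux_sum]
        show _ = (Faux phi U A ε (n+1)).1
        simp only [Faux]
        push_cast
        ring
  -- values at ε = 0
  set vst : ℝ := A / (1 - phi) with hvst
  set B : ℝ := U - vst with hBdef
  have hval0 : ∀ l, w 0 l = vst + B / phi ^ l := fun l =>
    Faux_val0 phi U A (ne_of_gt hphi0) (ne_of_gt h1phi) l
  have hB : B < 0 := by
    have h1 : 1 - phi < cm * (2 * (d:ℝ)) := (div_lt_iff₀ hd0).mp hlow
    have h2 : U * (1 - phi) < A := by rw [hA]; nlinarith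
    have : U < vst := (lt_div_iff₀ h1phi).mpr (by nlinarith)
    rw [hBdef]; linarith
  have hphiM : phi ^ M < 1 := pow_lt_one₀ (le_of_lt hphi0) hphi1 (by omega)
  have htM : (0:ℝ) < 1 - phi ^ M := by linarith
  have hvM : 0 < w 0 M := by
    have h2 : cm * (2 * (d:ℝ) * (1 - phi ^ M)) < 1 - phi :=
      (lt_div_iff₀ (by positivity)).mp hhigh
    have hAlt : A * (1 - phi ^ M) < U * (1 - phi) := by rw [hA]; nlinarith
    have hvU : vst * (1 - phi ^ M) < U := by
      rw [hvst, div_mul_eq_mul_div, div_lt_iff₀ h1phi]; nlinarith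
    have key : 0 < vst * phi ^ M + B := by rw [hBdef]; nlinarith
    have heq : vst + B / phi ^ M = (vst * phi ^ M + B) / phi ^ M := by
      field_simp
    rw [hval0, heq]
    exact div_pos key (pow_pos hphi0 M)
  have hmono0 : ∀ l : ℕ, 1 ≤ l → w 0 l < w 0 (l - 1) := by
    intro l hl
    rw [hval0, hval0]
    have hpl : phi ^ l < phi ^ (l - 1) :=
      pow_lt_pow_right_of_lt_one₀ hphi0 hphi1 (by omega)
    have : B / phi ^ l < B / phi ^ (l - 1) := by
      rw [div_lt_div_iff₀ (pow_pos hphi0 _) (pow_pos hphi0 _)]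
      exact mul_lt_mul_of_neg_left hpl hB
    linarith
  have hpos0 : ∀ l ≤ M, 0 < w 0 l := by
    intro l hlM
    have hpl : phi ^ M ≤ phi ^ l := pow_le_pow_of_le_one (le_of_lt hphi0) (le_of_lt hphi1) hlM
    have : B / phi ^ M ≤ B / phi ^ l := by
      rw [div_le_div_iff₀ (pow_pos hphi0 _) (pow_pos hphi0 _)]
      exact mul_le_mul_of_nonpos_left hpl (le_of_lt hB)
    have h1 := hval0 l; have h2 := hval0 M
    linarith
  have hSw0 : ∀ l ≤ M, U ≤ (Faux phi U A 0 l).2.1 := by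
    intro l hlM
    rw [Faux_sum]
    have h := Finset.single_le_sum (f := fun j => (Faux phi U A 0 j).1)
      (fun j hj => le_of_lt (hpos0 j (le_trans (Nat.le_of_lt_succ (Finset.mem_range.mp hj)) hlM)))
      (Finset.mem_range.mpr (Nat.succ_pos l))
    simpa [Faux] using h
  have hD0nonpos : ∀ l ≤ M, D 0 l ≤ 0 := by
    intro l
    induction l with
    | zero => intro _; simp [hDdef, Faux]
    | succ n ih =>
        intro hlM
        have h1 := ih (Nat.le_of_succ_le hlM)
        have h2 := hSw0 n (Nat.le_of_succ_le hlM)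
        show (Faux phi U A 0 (n+1)).2.2.1 ≤ 0
        simp only [Faux]
        have hc : (0:ℝ) < phi * ((n:ℝ)+1) := by positivity
        have : -(Faux phi U A 0 n).2.1 - 0 * (Faux phi U A 0 n).2.2.2
            + ((n:ℝ)+1) * (Faux phi U A 0 n).2.2.1 ≤ 0 := by
          simp only [hDdef] at h1
          nlinarith [Nat.cast_nonneg (α := ℝ) n]
        exact mul_nonpos_of_nonneg_of_nonpos (by positivity) this
  have hD0neg : ∀ l : ℕ, 1 ≤ l → l ≤ M → D 0 l < 0 := by
    intro l hl hlM
    obtain ⟨n, rfl⟩ : ∃ n, l = n + 1 := ⟨l - 1, by omega⟩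
    have h1 := hD0nonpos n (Nat.le_of_succ_le hlM)
    have h2 := hSw0 n (Nat.le_of_succ_le hlM)
    show (Faux phi U A 0 (n+1)).2.2.1 < 0
    simp only [Faux]
    have : -(Faux phi U A 0 n).2.1 - 0 * (Faux phi U A 0 n).2.2.2
        + ((n:ℝ)+1) * (Faux phi U A 0 n).2.2.1 < 0 := by
      simp only [hDdef] at h1
      nlinarith [Nat.cast_nonneg (α := ℝ) n]
    exact mul_neg_of_pos_of_neg (by positivity) this
  -- continuity
  have hwc : ∀ l, Continuous fun ε => w ε l := fun l =>
    continuous_fst.comp (Faux_cont phi U A l)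
  have hDc : ∀ l, Continuous fun ε => D ε l := fun l =>
    (continuous_fst.comp (continuous_snd.comp continuous_snd)).comp (Faux_cont phi U A l)
  -- eventual properties near 0
  have hkey : ∀ l ∈ Finset.Icc 1 M, ∀ᶠ ε in nhds (0:ℝ),
      0 < w ε l ∧ w ε l < w ε (l-1) ∧ D ε l < 0 := by
    intro l hl
    rw [Finset.mem_Icc] at hl
    have e1 : ∀ᶠ ε in nhds (0:ℝ), 0 < w ε l :=
      ((hwc l).tendsto 0).eventually (eventually_gt_nhds (hpos0 l hl.2))
    have e2 : ∀ᶠ ε in nhds (0:ℝ), w ε l < w ε (l-1) := by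
      have := (((hwc (l-1)).sub (hwc l)).tendsto 0).eventually
        (eventually_gt_nhds (show (0:ℝ) < w 0 (l-1) - w 0 l by
          have := hmono0 l hl.1; linarith))
      exact this.mono fun ε h => by simpa [sub_pos] using h
    have e3 : ∀ᶠ ε in nhds (0:ℝ), D ε l < 0 :=
      ((hDc l).tendsto 0).eventually (eventually_lt_nhds (hD0neg l hl.1 hl.2))
    exact e1.and (e2.and e3)
  have hall : ∀ᶠ ε in nhds (0:ℝ), ∀ l ∈ Finset.Icc 1 M,
      0 < w ε l ∧ w ε l < w ε (l-1) ∧ D ε l < 0 :=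
    (Filter.eventually_all_finset _).mpr hkey
  rw [Metric.eventually_nhds_iff] at hall
  obtain ⟨δ, hδ, hball⟩ := hall
  have hP : ∀ ε : ℝ, 0 < ε → ε ≤ δ/2 → ∀ l ∈ Finset.Icc 1 M,
      0 < w ε l ∧ w ε l < w ε (l-1) ∧ D ε l < 0 := by
    intro ε hε hεb
    refine hball ?_
    rw [Real.dist_eq, sub_zero, abs_of_pos hε]
    linarith
  refine ⟨δ/2, by linarith, ?_, ?_, ?_⟩
  · intro ε hε hεb l hlM
    match l with
    | 0 => rw [hu0 ε hε]; exact hU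
    | n + 1 =>
        rw [huw (n+1) hlM ε hε]
        exact (hP ε hε hεb (n+1) (Finset.mem_Icc.mpr ⟨Nat.succ_le_succ (Nat.zero_le n), hlM⟩)).1
  · intro ε hε hεb l hl hlM
    rw [huw l hlM ε hε, huw (l-1) (le_trans (Nat.sub_le l 1) hlM) ε hε]
    exact (hP ε hε hεb l (Finset.mem_Icc.mpr ⟨hl, hlM⟩)).2.1
  · intro l hlM
    match l with
    | 0 =>
        intro a ha b hb _
        show u b 0 ≤ u a 0
        rw [hu0 a ha.1, hu0 b hb.1]
    | n + 1 =>
        have hanti : AntitoneOn (fun ε => w ε (n+1)) (Set.Icc 0 (δ/2)) := by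
          refine antitoneOn_of_deriv_nonpos (convex_Icc _ _) ((hwc (n+1)).continuousOn)
            (fun x _ => ((Faux_hasDerivAt phi U A x (n+1)).1.differentiableAt).differentiableWithinAt)
            (fun x hx => ?_)
          rw [interior_Icc] at hx
          have hder : deriv (fun ε => w ε (n+1)) x = D x (n+1) :=
            (Faux_hasDerivAt phi U A x (n+1)).1.deriv
          rw [hder]
          exact le_of_lt (hP x hx.1 (le_of_lt hx.2) (n+1)
            (Finset.mem_Icc.mpr ⟨Nat.succ_le_succ (Nat.zero_le n), hlM⟩)).2.2
        intro a ha b hb hab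
        have := hanti (Set.Ioc_subset_Icc_self ha) (Set.Ioc_subset_Icc_self hb) hab
        simpa [huw (n+1) hlM a ha.1, huw (n+1) hlM b hb.1] using this
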